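/- Let f : ℝ → ℝ be twice continuously differentiable on a neighborhood of c, and let K be a continuous probability density with compact support. Define μ₊,ⱼ(h) = E[1(X ≥ c) K_h(X − c)(X − c)ʲ] for j ∈ ℕ, where K_h(u) = K(u/h)/h and X has density f. Then as h → 0⁺, μ₊,ⱼ(h) = hʲ [f(c)·K₊,₁ⱼ + h·f′(c)·K₊,₁(ⱼ₊₁) + O(h²)], where K₊,₁ⱼ = ∫₀^∞ uʲ K(u) du. -/

import Mathlib

open MeasureTheory Filter

theorem one_sided_kernel_moment_expansion
    (f : ℝ → ℝ) (c : ℝ) (s : Set ℝ) (hs : s ∈ nhds c) (hf : ContDiffOn ℝ 2 f s)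
    (K : ℝ → ℝ) (hK_cont : Continuous K) (hK_nonneg : ∀ u, 0 ≤ K u)
    (hK_supp : HasCompactSupport K) (hK_prob : ∫ u, K u = 1)
    (j : ℕ) :
    (fun h : ℝ =>
        (∫ x in Set.Ici c, (K ((x - c) / h) / h) * (x - c) ^ j * f x)
          - h ^ j * (f c * (∫ u in Set.Ioi (0:ℝ), u ^ j * K u)
              + h * deriv f c * (∫ u in Set.Ioi (0:ℝ), u ^ (j + 1) * K u)))
      =O[nhdsWithin 0 (Set.Ioi 0)] (fun h : ℝ => h ^ (j + 2)) := by
  -- a bound on the support of K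
  obtain ⟨M0, hM0⟩ := hK_supp.isBounded.subset_closedBall 0
  set M : ℝ := max M0 1 with hMdef
  have hM1 : (0:ℝ) < M := lt_of_lt_of_le one_pos (le_max_right _ _)
  have hKzero : ∀ y : ℝ, M < y → K y = 0 := by
    intro y hy
    by_contra hKy
    have hmem : y ∈ tsupport K := subset_tsupport K (by simpa [Function.mem_support] using hKy)
    have := hM0 hmem
    rw [Metric.mem_closedBall, Real.dist_eq, sub_zero] at this
    have : y ≤ M0 := (le_abs_self y).trans this
    have : y ≤ M := this.trans (le_max_left _ _)
    linarith
  -- a neighborhood of c inside s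
  obtain ⟨ε, hε, hball⟩ := Metric.mem_nhds_iff.mp hs
  set δ : ℝ := ε / 2 with hδdef
  have hδ : 0 < δ := by positivity
  have hsub : Set.Icc (c - δ) (c + δ) ⊆ s := by
    intro x hx
    apply hball
    rw [Metric.mem_ball, Real.dist_eq]
    rw [abs_sub_lt_iff]
    constructor
    · have := hx.2; simp only [hδdef] at this ⊢; linarith
    · have := hx.1; simp only [hδdef] at this ⊢; linarith
  -- Taylor bound
  have htaylor : ∃ C : ℝ, 0 ≤ C ∧ ∀ x ∈ Set.Icc c (c + δ),
      |f x - (f c + (x - c) * deriv f c)| ≤ C * (x - c) ^ 2 := by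
    have hsub' : Set.Icc c (c + δ) ⊆ s := fun x hx => hsub ⟨by linarith [hx.1], hx.2⟩
    have hab : c ≤ c + δ := by linarith
    have hf2 : ContDiffOn ℝ ((1:ℕ) + 1) f (Set.Icc c (c + δ)) := by
      exact_mod_cast hf.mono hsub'
    obtain ⟨C, hC⟩ := exists_taylor_mean_remainder_bound hab hf2
    refine ⟨max C 0, le_max_right _ _, fun x hx => ?_⟩
    have hu : UniqueDiffOn ℝ (Set.Icc c (c + δ)) := uniqueDiffOn_Icc (by linarith)
    have hcm : c ∈ Set.Icc c (c + δ) := ⟨le_refl c, hab⟩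
    have hdc : DifferentiableAt ℝ f c :=
      ((hf.contDiffAt hs).differentiableAt (by norm_num))
    have hder : derivWithin f (Set.Icc c (c + δ)) c = deriv f c :=
      hdc.derivWithin (hu c hcm)
    have htay : taylorWithinEval f 1 (Set.Icc c (c + δ)) c x
        = f c + (x - c) * deriv f c := by
      rw [show (1:ℕ) = 0 + 1 from rfl, taylorWithinEval_succ, taylor_within_zero_eval]
      rw [iteratedDerivWithin_one]
      simp [hder]
    have := hC x hx
    rw [htay] at this
    calc |f x - (f c + (x - c) * deriv f c)| ≤ C * (x - c) ^ 2 := by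
          simpa [Real.norm_eq_abs] using this
      _ ≤ max C 0 * (x - c) ^ 2 := by
          apply mul_le_mul_of_nonneg_right (le_max_left _ _) (sq_nonneg _)
  obtain ⟨C, hC0, hC⟩ := htaylor
  -- moment integrability
  have hmom : ∀ m : ℕ, Integrable (fun y : ℝ => y ^ m * K y) := fun m =>
    ((continuous_pow m).mul hK_cont).integrable_of_hasCompactSupport hK_supp.mul_left
  set I2 : ℝ := ∫ u in Set.Ioi (0:ℝ), u ^ (j + 2) * K u with hI2
  rw [Asymptotics.isBigO_iff]
  refine ⟨C * I2, ?_⟩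
  have hmem : Set.Ioc (0:ℝ) (δ / M) ∈ nhdsWithin 0 (Set.Ioi 0) :=
    Ioc_mem_nhdsGT_of_mem ⟨le_refl 0, by positivity⟩
  filter_upwards [hmem] with h hh
  obtain ⟨hh0, hhM⟩ := hh
  have hhM' : h * M ≤ δ := by
    rw [le_div_iff₀ hM1] at hhM
    exact hhM
  -- change of variables
  have cov : (∫ x in Set.Ici c, (K ((x - c) / h) / h) * (x - c) ^ j * f x)
      = h ^ j * ∫ y in Set.Ioi (0:ℝ), y ^ j * K y * f (c + h * y) := by
    set F : ℝ → ℝ := fun x => (K ((x - c) / h) / h) * (x - c) ^ j * f x with hF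
    have step1 : (∫ x in Set.Ici c, F x) = ∫ t in Set.Ioi (0:ℝ), F (t + c) := by
      rw [integral_Ici_eq_integral_Ioi, ← integral_indicator measurableSet_Ioi,
        ← integral_indicator measurableSet_Ioi,
        ← integral_add_right_eq_self ((Set.Ioi c).indicator F) c]
      congr 1
      ext t
      simp only [Set.indicator_apply, Set.mem_Ioi, lt_add_iff_pos_left]
    have step2 : (∫ t in Set.Ioi (0:ℝ), F (t + c))
        = h • ∫ y in Set.Ioi (0:ℝ), F (h * y + c) := by
      rw [integral_comp_mul_left_Ioi (fun t => F (t + c)) 0 hh0, mul_zero, smul_smul,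
        mul_inv_cancel₀ hh0.ne', one_smul]
    rw [step1, step2]
    rw [smul_eq_mul, ← integral_const_mul, ← integral_const_mul]
    congr 1
    ext y
    have hyy : h * y / h = y := mul_div_cancel_left₀ y hh0.ne'
    simp only [hF, add_sub_cancel_right, hyy]
    have hKy : h * (K y / h) = K y := by field_simp
    calc h * (K y / h * (h * y) ^ j * f (h * y + c))
        = (h * (K y / h)) * ((h * y) ^ j * f (h * y + c)) := by ring
      _ = h ^ j * (y ^ j * K y * f (c + h * y)) := by
          rw [hKy, mul_pow]; ring_nf
  -- integrability of the main integrand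
  set G : ℝ → ℝ := fun y => y ^ j * K y * f (c + h * y) with hG
  have hmaps : Set.MapsTo (fun y : ℝ => c + h * y) (Set.Icc 0 M) s := by
    intro y hy
    apply hsub
    have h1 : 0 ≤ h * y := mul_nonneg hh0.le hy.1
    have h2 : h * y ≤ h * M := mul_le_mul_of_nonneg_left hy.2 hh0.le
    show c + h * y ∈ Set.Icc (c - δ) (c + δ)
    exact ⟨by linarith, by linarith⟩
  have hGcont : ContinuousOn G (Set.Icc 0 M) := by
    apply ContinuousOn.mul
    · exact ((continuous_pow j).mul hK_cont).continuousOn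
    · exact hf.continuousOn.comp
        ((continuous_const.add (continuous_const.mul continuous_id)).continuousOn) hmaps
  have hGint : IntegrableOn G (Set.Ioi (0:ℝ)) := by
    have heq : (Set.Ioi (0:ℝ)).indicator G = (Set.Ioc (0:ℝ) M).indicator G := by
      ext y
      by_cases h1 : y ∈ Set.Ioc (0:ℝ) M
      · rw [Set.indicator_of_mem h1, Set.indicator_of_mem (show y ∈ Set.Ioi (0:ℝ) from h1.1)]
      · by_cases h2 : y ∈ Set.Ioi (0:ℝ)
        · have hyM : M < y := by
            rcases lt_or_ge M y with h3 | h3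
            · exact h3
            · exact absurd ⟨h2, h3⟩ h1
          have : K y = 0 := hKzero y hyM
          rw [Set.indicator_of_mem h2, Set.indicator_of_notMem h1]
          simp [hG, this]
        · rw [Set.indicator_of_notMem h2, Set.indicator_of_notMem h1]
    have hIcc : IntegrableOn G (Set.Ioc (0:ℝ) M) :=
      (hGcont.integrableOn_compact isCompact_Icc).mono_set Set.Ioc_subset_Icc_self
    rw [← integrable_indicator_iff measurableSet_Ioi, heq,
      integrable_indicator_iff measurableSet_Ioc]
    exact hIcc
  -- splitting the integral
  set R : ℝ → ℝ := fun y => y ^ j * K y * (f (c + h * y) - (f c + h * y * deriv f c)) with hR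
  have hG1int : IntegrableOn (fun y : ℝ => f c * (y ^ j * K y)) (Set.Ioi (0:ℝ)) :=
    ((hmom j).const_mul (f c)).integrableOn
  have hG2int : IntegrableOn (fun y : ℝ => (h * deriv f c) * (y ^ (j + 1) * K y))
      (Set.Ioi (0:ℝ)) := ((hmom (j + 1)).const_mul _).integrableOn
  have hRint : IntegrableOn R (Set.Ioi (0:ℝ)) := by
    have : R = fun y => G y - f c * (y ^ j * K y) - (h * deriv f c) * (y ^ (j + 1) * K y) := by
      funext y
      simp only [hR, hG]
      ring
    rw [this]
    exact (hGint.sub hG1int).sub hG2int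
  have hsplit : ∫ y in Set.Ioi (0:ℝ), G y
      = f c * (∫ u in Set.Ioi (0:ℝ), u ^ j * K u)
        + h * deriv f c * (∫ u in Set.Ioi (0:ℝ), u ^ (j + 1) * K u)
        + ∫ y in Set.Ioi (0:ℝ), R y := by
    have hsp1 : (∫ y in Set.Ioi (0:ℝ), G y)
        = ∫ y in Set.Ioi (0:ℝ),
            (f c * (y ^ j * K y) + (h * deriv f c) * (y ^ (j + 1) * K y) + R y) := by
      apply integral_congr_ae
      apply Filter.Eventually.of_forall
      intro y
      simp only [hR, hG]
      ring
    have hG12int : IntegrableOn (fun y : ℝ => f c * (y ^ j * K y)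
        + (h * deriv f c) * (y ^ (j + 1) * K y)) (Set.Ioi (0:ℝ)) := hG1int.add hG2int
    rw [hsp1, integral_add hG12int hRint, integral_add hG1int hG2int,
      integral_const_mul, integral_const_mul]
  -- the bound on the remainder integral
  have hbound : ‖∫ y in Set.Ioi (0:ℝ), R y‖ ≤ C * h ^ 2 * I2 := by
    have hdom : IntegrableOn (fun y : ℝ => (C * h ^ 2) * (y ^ (j + 2) * K y))
        (Set.Ioi (0:ℝ)) := ((hmom (j + 2)).const_mul _).integrableOn
    have hptwise : ∀ y ∈ Set.Ioi (0:ℝ), ‖R y‖ ≤ (C * h ^ 2) * (y ^ (j + 2) * K y) := by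
      intro y hy
      have hy0 : 0 < y := hy
      by_cases hyM : y ≤ M
      · have hx : c + h * y ∈ Set.Icc c (c + δ) := by
          have h1 : 0 ≤ h * y := mul_nonneg hh0.le hy0.le
          have h2 : h * y ≤ h * M := mul_le_mul_of_nonneg_left hyM hh0.le
          exact ⟨by linarith, by linarith⟩
        have htb := hC (c + h * y) hx
        have heq1 : c + h * y - c = h * y := by ring
        rw [heq1] at htb
        have habs : |f (c + h * y) - (f c + h * y * deriv f c)| ≤ C * (h * y) ^ 2 := htb
        have : ‖R y‖ = y ^ j * K y * |f (c + h * y) - (f c + h * y * deriv f c)| := by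
          rw [hR, Real.norm_eq_abs, abs_mul, abs_mul, abs_of_nonneg (pow_nonneg hy0.le j),
            abs_of_nonneg (hK_nonneg y)]
        rw [this]
        calc y ^ j * K y * |f (c + h * y) - (f c + h * y * deriv f c)|
            ≤ y ^ j * K y * (C * (h * y) ^ 2) := by
              apply mul_le_mul_of_nonneg_left habs
              exact mul_nonneg (pow_nonneg hy0.le j) (hK_nonneg y)
          _ = (C * h ^ 2) * (y ^ (j + 2) * K y) := by ring
      · have hKy : K y = 0 := hKzero y (not_le.mp hyM)
        simp [hR, hKy]
    calc ‖∫ y in Set.Ioi (0:ℝ), R y‖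
        ≤ ∫ y in Set.Ioi (0:ℝ), (C * h ^ 2) * (y ^ (j + 2) * K y) := by
          apply norm_integral_le_of_norm_le hdom
          exact (ae_restrict_iff' measurableSet_Ioi).mpr (ae_of_all _ hptwise)
      _ = C * h ^ 2 * I2 := by rw [integral_const_mul]
  -- put everything together
  rw [cov, hsplit]
  have heq2 : h ^ j * (f c * (∫ u in Set.Ioi (0:ℝ), u ^ j * K u)
        + h * deriv f c * (∫ u in Set.Ioi (0:ℝ), u ^ (j + 1) * K u)
        + ∫ y in Set.Ioi (0:ℝ), R y)
      - h ^ j * (f c * (∫ u in Set.Ioi (0:ℝ), u ^ j * K u)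
        + h * deriv f c * (∫ u in Set.Ioi (0:ℝ), u ^ (j + 1) * K u))
      = h ^ j * ∫ y in Set.Ioi (0:ℝ), R y := by ring
  rw [heq2]
  rw [norm_mul, Real.norm_eq_abs (h ^ j), abs_of_nonneg (pow_nonneg hh0.le j)]
  calc h ^ j * ‖∫ y in Set.Ioi (0:ℝ), R y‖
      ≤ h ^ j * (C * h ^ 2 * I2) := by
        exact mul_le_mul_of_nonneg_left hbound (pow_nonneg hh0.le j)
    _ = C * I2 * h ^ (j + 2) := by ring
    _ ≤ C * I2 * ‖h ^ (j + 2)‖ := by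
        rw [Real.norm_eq_abs, abs_of_nonneg (pow_nonneg hh0.le _)]
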